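/- Assume hypotheses (H1) and (H2). Then H(I) tends to (A/α)·(R₀ − 1) as I tends to 0 from the right; that is, the limit of H along the filter of positive reals approaching 0 equals β·k(S₀) − A/α = (A/α)·(R₀ − 1). -/

import Mathlib

/-- H(I) → (A/α)·(R₀ − 1) as I → 0⁺. -/
theorem stmt_2
    (b μ β α c γ : ℝ)
    (hb : 0 < b) (hμ : 0 < μ) (hβ : 0 < β) (hα : 0 < α) (hc : 0 < c) (hγ : 0 < γ)
    (f : ℝ → ℝ → ℝ) (k : ℝ → ℝ)
    (hf_nonneg : ∀ S ≥ (0:ℝ), ∀ I ≥ (0:ℝ), 0 ≤ f S I)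
    (hf0S : ∀ I ≥ (0:ℝ), f 0 I = 0)
    (hf0I : ∀ S ≥ (0:ℝ), f S 0 = 0)
    -- (H1)
    (H1a : ∀ I > (0:ℝ), StrictMonoOn (fun S => f S I) (Set.Ici (0:ℝ)))
    (H1b : ∀ S ≥ (0:ℝ), MonotoneOn (fun I => f S I) (Set.Ioi (0:ℝ)))
    -- (H2)
    (H2a : ∀ S ≥ (0:ℝ), BddAbove ((fun I => f S I / I) '' Set.Ioi (0:ℝ)) ∧
      AntitoneOn (fun I => f S I / I) (Set.Ioi (0:ℝ)))
    (H2b : ∀ S ≥ (0:ℝ), Filter.Tendsto (fun I => f S I / I)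
      (nhdsWithin 0 (Set.Ioi 0)) (nhds (k S)))
    (hk_cont : ContinuousOn k (Set.Ici (0:ℝ)))
    (hk_mono : MonotoneOn k (Set.Ici (0:ℝ))) :
    Filter.Tendsto
      (fun I : ℝ => β * f (b / μ - (μ + α) * (μ + c + γ) * I / (μ * α)) I / I
        - (μ + α) * (μ + c + γ) / α)
      (nhdsWithin 0 (Set.Ioi 0))
      (nhds (β * k (b / μ) - (μ + α) * (μ + c + γ) / α))
    ∧ β * k (b / μ) - (μ + α) * (μ + c + γ) / α
        = ((μ + α) * (μ + c + γ) / α)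
          * (β * α * k (b / μ) / ((μ + α) * (μ + c + γ)) - 1) := by
  have hS0 : (0:ℝ) < b / μ := div_pos hb hμ
  set A : ℝ := (μ + α) * (μ + c + γ) with hAdef
  have hApos : 0 < A := by positivity
  have hμα : 0 < μ * α := mul_pos hμ hα
  constructor
  · -- key limit
    have key : Filter.Tendsto (fun I : ℝ => f (b / μ - A * I / (μ * α)) I / I)
        (nhdsWithin 0 (Set.Ioi 0)) (nhds (k (b / μ))) := by
      rw [Metric.tendsto_nhds]
      intro ε hε
      -- continuity of k at S₀ within Ici 0
      have hcont : ContinuousWithinAt k (Set.Ici (0:ℝ)) (b / μ) :=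
        hk_cont (b / μ) hS0.le
      rw [Metric.continuousWithinAt_iff] at hcont
      obtain ⟨δ', hδ', hδ'prop⟩ := hcont (ε / 2) (by linarith)
      set S₁ : ℝ := max 0 (b / μ - δ' / 2) with hS₁def
      have hS₁0 : 0 ≤ S₁ := le_max_left _ _
      have hS₁lt : S₁ < b / μ := by
        apply max_lt hS0; linarith
      have hS₁close : dist S₁ (b / μ) < δ' := by
        rw [Real.dist_eq, abs_sub_lt_iff]
        constructor
        · linarith
        · have : b / μ - δ' / 2 ≤ S₁ := le_max_right _ _
          linarith
      have hkS₁ : k (b / μ) - ε / 2 < k S₁ := by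
        have := hδ'prop hS₁0 hS₁close
        rw [Real.dist_eq, abs_sub_lt_iff] at this
        linarith [this.2]
      -- eventually bounds from H2b
      have h1 := (H2b S₁ hS₁0)
      have h2 := (H2b (b / μ) hS0.le)
      rw [Metric.tendsto_nhds] at h1 h2
      have e1 := h1 (ε / 2) (by linarith)
      have e2 := h2 ε hε
      -- eventually I is small
      set δ₂ : ℝ := (b / μ - S₁) * (μ * α) / A with hδ₂def
      have hδ₂pos : 0 < δ₂ := by
        apply div_pos (mul_pos (by linarith) hμα) hApos
      have e3 : ∀ᶠ I in nhdsWithin 0 (Set.Ioi 0), I ∈ Set.Ioo (0:ℝ) δ₂ :=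
        Filter.eventually_of_mem (Ioo_mem_nhdsGT_of_mem ⟨le_refl _, hδ₂pos⟩)
          (fun x hx => hx)
      filter_upwards [e1, e2, e3] with I hI1 hI2 hI3
      obtain ⟨hIpos, hIδ₂⟩ := hI3
      set SI : ℝ := b / μ - A * I / (μ * α) with hSIdef
      have hS₁SI : S₁ ≤ SI := by
        rw [hSIdef]
        have : A * I / (μ * α) < b / μ - S₁ := by
          rw [div_lt_iff₀ hμα]
          have := (mul_lt_mul_iff_of_pos_right hApos).2 hIδ₂
          calc A * I = I * A := by ring
            _ < δ₂ * A := by exact (mul_lt_mul_iff_of_pos_right hApos).2 hIδ₂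
            _ = (b / μ - S₁) * (μ * α) := by
                rw [hδ₂def]; field_simp
        linarith
      have hSI0 : 0 ≤ SI := le_trans hS₁0 hS₁SI
      have hSIS0 : SI ≤ b / μ := by
        rw [hSIdef]
        have : 0 ≤ A * I / (μ * α) := by positivity
        linarith
      -- monotonicity
      have hmono := (H1a I hIpos).monotoneOn
      have hlow : f S₁ I ≤ f SI I := hmono hS₁0 hSI0 hS₁SI
      have hhigh : f SI I ≤ f (b / μ) I := hmono hSI0 hS0.le hSIS0
      have hlowd : f S₁ I / I ≤ f SI I / I := by gcongr
      have hhighd : f SI I / I ≤ f (b / μ) I / I := by gcongr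
      rw [Real.dist_eq, abs_sub_lt_iff] at hI1 hI2 ⊢
      constructor
      · linarith [hI2.1]
      · linarith [hI1.2]
    have := (key.const_mul β).sub_const (A / α)
    simpa [mul_div_assoc] using this
  · field_simp
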